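/- arXiv:1007.3089 — 4 statements merged into one kernel-verified Lean document; each statement's English description precedes it below -/
import Mathlib

section
/- Let $\sigma$ be a weight, $1 < r < \infty$, and $f \geq 0$ with $f \in L^r(\sigma)$, and suppose $M_\sigma f$ is finite a.e. Given any collection $\mathcal{S}$ of dyadic cubes with finite $\sigma$-measure, there exists a subcollection $\mathcal{G} \subseteq \mathcal{S}$ ('principal cubes') such that: (i) every $Q \in \mathcal{S}$ is contained in some $G \in \mathcal{G}$ with $\mathbb{E}^\sigma_Q f \leq 2\, \mathbb{E}^\sigma_G f$; and (ii) if $G, G' \in \mathcal{G}$ with $G \subsetneq G'$, then $2\, \mathbb{E}^\sigma_{G'} f < \mathbb{E}^\sigma_G f$. -/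
open MeasureTheory Set

/-- The half-open dyadic cube of generation `k` (side length `2^(-k)`) at position `m`. -/
def dyadicCube (d : ℕ) (k : ℤ) (m : Fin d → ℤ) : Set (Fin d → ℝ) :=
  {x | ∀ i, (m i : ℝ) * 2 ^ (-k) ≤ x i ∧ x i < ((m i : ℝ) + 1) * 2 ^ (-k)}

/-- Index of the dyadic parent of the dyadic cube indexed by `(k, m)`. -/
def dyadicParentIdx (d : ℕ) : ℤ × (Fin d → ℤ) → ℤ × (Fin d → ℤ) :=
  fun p => (p.1 - 1, fun i => Int.fdiv (p.2 i) 2)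

/-- The dyadic cube corresponding to an index pair. -/
def cubeOf (d : ℕ) (p : ℤ × (Fin d → ℤ)) : Set (Fin d → ℝ) := dyadicCube d p.1 p.2

/-- The dyadic parent of the cube indexed by `p`. -/
def parentCubeOf (d : ℕ) (p : ℤ × (Fin d → ℤ)) : Set (Fin d → ℝ) :=
  cubeOf d (dyadicParentIdx d p)

/-- The dyadic grandparent of the cube indexed by `p`. -/
def grandparentCubeOf (d : ℕ) (p : ℤ × (Fin d → ℤ)) : Set (Fin d → ℝ) :=
  cubeOf d (dyadicParentIdx d (dyadicParentIdx d p))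

/-- The dyadic weighted maximal function with respect to the measure `μ = σ dx`. -/
noncomputable def dyadicMaximal (d : ℕ) (μ : MeasureTheory.Measure (Fin d → ℝ))
    (g : (Fin d → ℝ) → ENNReal) (x : Fin d → ℝ) : ENNReal :=
  ⨆ p : ℤ × (Fin d → ℤ),
    (cubeOf d p).indicator
      (fun _ => (μ (cubeOf d p))⁻¹ * ∫⁻ y in cubeOf d p, g y ∂μ) x

namespace PrincipalAux

variable {d : ℕ}

lemma corner_mem (p : ℤ × (Fin d → ℤ)) :
    (fun i => (p.2 i : ℝ) * 2 ^ (-p.1)) ∈ cubeOf d p := by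
  intro i
  have h : (0:ℝ) < 2 ^ (-p.1) := by positivity
  refine ⟨le_refl _, ?_⟩
  show (p.2 i : ℝ) * 2 ^ (-p.1) < ((p.2 i : ℝ) + 1) * 2 ^ (-p.1)
  nlinarith

lemma interval_lemma {k k' : ℤ} (hkk : k ≤ k') {a a' : ℤ} {t s : ℝ}
    (h1 : (a:ℝ) * 2^(-k) ≤ t) (h2 : t < ((a:ℝ)+1) * 2^(-k))
    (h3 : (a':ℝ) * 2^(-k') ≤ t) (h4 : t < ((a':ℝ)+1) * 2^(-k'))
    (hs1 : (a':ℝ) * 2^(-k') ≤ s) (hs2 : s < ((a':ℝ)+1) * 2^(-k')) :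
    (a:ℝ) * 2^(-k) ≤ s ∧ s < ((a:ℝ)+1) * 2^(-k) := by
  set c : ℤ := 2 ^ (k' - k).toNat with hc
  have hp : (0:ℝ) < 2 ^ (-k') := by positivity
  have hkey : (2:ℝ) ^ (-k) = (c:ℝ) * 2 ^ (-k') := by
    have e1 : (2:ℝ)^(-k) = 2^(k'-k) * 2^(-k') := by
      rw [← zpow_add₀ (by norm_num : (2:ℝ) ≠ 0)]
      congr 1; ring
    have e2 : (2:ℝ)^(k'-k) = (c:ℝ) := by
      rw [hc]; push_cast
      rw [← zpow_natCast (2:ℝ)]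
      congr 1
      omega
    rw [e1, e2]
  have ha : a * c ≤ a' := by
    have hlt : ((a:ℝ) * c) * 2^(-k') < ((a':ℝ)+1) * 2^(-k') := by
      calc ((a:ℝ) * c) * 2^(-k') = (a:ℝ) * 2^(-k) := by rw [hkey]; ring
        _ ≤ t := h1
        _ < _ := h4
    have h' : (a:ℝ) * c < (a':ℝ) + 1 := (mul_lt_mul_iff_of_pos_right hp).mp hlt
    have : (a * c : ℤ) < a' + 1 := by exact_mod_cast h'
    omega
  have hb : a' + 1 ≤ (a + 1) * c := by
    have hlt : (a':ℝ) * 2^(-k') < (((a:ℝ)+1) * c) * 2^(-k') := by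
      calc (a':ℝ) * 2^(-k') ≤ t := h3
        _ < ((a:ℝ)+1) * 2^(-k) := h2
        _ = _ := by rw [hkey]; ring
    have h' : (a':ℝ) < ((a:ℝ)+1) * c := (mul_lt_mul_iff_of_pos_right hp).mp hlt
    have : (a' : ℤ) < (a+1) * c := by exact_mod_cast h'
    omega
  constructor
  · calc (a:ℝ) * 2^(-k) = ((a*c : ℤ):ℝ) * 2^(-k') := by push_cast; rw [hkey]; ring
      _ ≤ (a':ℝ) * 2^(-k') := by
          have : ((a*c:ℤ):ℝ) ≤ (a':ℝ) := by exact_mod_cast ha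
          nlinarith
      _ ≤ s := hs1
  · calc s < ((a':ℝ)+1) * 2^(-k') := hs2
      _ ≤ (((a+1)*c : ℤ):ℝ) * 2^(-k') := by
          have : ((a':ℝ)+1) ≤ (((a+1)*c:ℤ):ℝ) := by exact_mod_cast hb
          nlinarith
      _ = ((a:ℝ)+1) * 2^(-k) := by push_cast; rw [hkey]; ring

lemma cube_subset {p q : ℤ × (Fin d → ℤ)} (hk : q.1 ≤ p.1) {x : Fin d → ℝ}
    (hxp : x ∈ cubeOf d p) (hxq : x ∈ cubeOf d q) : cubeOf d p ⊆ cubeOf d q := by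
  intro y hy i
  exact interval_lemma hk (hxq i).1 (hxq i).2 (hxp i).1 (hxp i).2 (hy i).1 (hy i).2

lemma cube_comparable {p q : ℤ × (Fin d → ℤ)} {x : Fin d → ℝ}
    (hxp : x ∈ cubeOf d p) (hxq : x ∈ cubeOf d q) :
    cubeOf d p ⊆ cubeOf d q ∨ cubeOf d q ⊆ cubeOf d p := by
  rcases le_total q.1 p.1 with h | h
  · exact Or.inl (cube_subset h hxp hxq)
  · exact Or.inr (cube_subset h hxq hxp)

lemma same_gen {p q : ℤ × (Fin d → ℤ)} (hk : p.1 = q.1) {x : Fin d → ℝ}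
    (hxp : x ∈ cubeOf d p) (hxq : x ∈ cubeOf d q) : p.2 = q.2 := by
  funext i
  have hpos : (0:ℝ) < 2^(-q.1) := by positivity
  have hk' : (2:ℝ)^(-p.1) = 2^(-q.1) := by rw [hk]
  have h1 : (p.2 i : ℝ) * 2^(-q.1) < ((q.2 i:ℝ)+1) * 2^(-q.1) := by
    rw [← hk']
    exact lt_of_le_of_lt (hxp i).1 (by rw [hk']; exact (hxq i).2)
  have h2 : (q.2 i : ℝ) * 2^(-q.1) < ((p.2 i:ℝ)+1) * 2^(-q.1) := by
    calc (q.2 i : ℝ) * 2^(-q.1) ≤ x i := (hxq i).1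
      _ < ((p.2 i:ℝ)+1) * 2^(-p.1) := (hxp i).2
      _ = ((p.2 i:ℝ)+1) * 2^(-q.1) := by rw [hk']
  have h1' : (p.2 i : ℝ) < (q.2 i:ℝ)+1 := (mul_lt_mul_iff_of_pos_right hpos).mp h1
  have h2' : (q.2 i : ℝ) < (p.2 i:ℝ)+1 := (mul_lt_mul_iff_of_pos_right hpos).mp h2
  have e1 : p.2 i < q.2 i + 1 := by exact_mod_cast h1'
  have e2 : q.2 i < p.2 i + 1 := by exact_mod_cast h2'
  omega

lemma gen_le_of_subset (hd : 0 < d) {p q : ℤ × (Fin d → ℤ)}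
    (h : cubeOf d p ⊆ cubeOf d q) : q.1 ≤ p.1 := by
  set i : Fin d := ⟨0, hd⟩
  set x : Fin d → ℝ := fun j => (p.2 j : ℝ) * 2 ^ (-p.1) with hx
  have hxp : x ∈ cubeOf d p := corner_mem p
  have hxq : x ∈ cubeOf d q := h hxp
  have hp1 : (0:ℝ) < 2^(-p.1) := by positivity
  have hp2 : (0:ℝ) < 2^(-q.1) := by positivity
  have hupper : ((p.2 i:ℝ)+1) * 2^(-p.1) ≤ ((q.2 i:ℝ)+1) * 2^(-q.1) := by
    by_contra hcon
    push_neg at hcon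
    set t : ℝ := max ((p.2 i:ℝ) * 2^(-p.1)) (((q.2 i:ℝ)+1) * 2^(-q.1)) with ht
    have hy : Function.update x i t ∈ cubeOf d p := by
      intro j
      by_cases hj : j = i
      · subst hj
        rw [Function.update_self]
        refine ⟨le_max_left _ _, ?_⟩
        apply max_lt
        · nlinarith
        · exact hcon
      · rw [Function.update_of_ne hj]
        exact hxp j
    have h2 := (h hy) i
    rw [Function.update_self] at h2
    exact absurd h2.2 (not_lt.mpr (le_max_right _ _))
  have hlower : (q.2 i:ℝ) * 2^(-q.1) ≤ (p.2 i:ℝ) * 2^(-p.1) := (hxq i).1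
  have hle : (2:ℝ)^(-p.1) ≤ 2^(-q.1) := by nlinarith
  have := (zpow_le_zpow_iff_right₀ (by norm_num : (1:ℝ) < 2)).mp hle
  omega

/-- `S` is a cube of the collection `𝒮`. -/
def inC (d : ℕ) (𝒮 : Set (ℤ × (Fin d → ℤ))) (S : Set (Fin d → ℝ)) : Prop :=
  ∃ p ∈ 𝒮, cubeOf d p = S

/-- The strict ancestors of `S` within the collection. -/
def anc (d : ℕ) (𝒮 : Set (ℤ × (Fin d → ℤ))) (S : Set (Fin d → ℝ)) :
    Set (Set (Fin d → ℝ)) :=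
  {T | inC d 𝒮 T ∧ S ⊂ T}

/-- The average of `f` over `S` with respect to `μ`. -/
noncomputable def avg (d : ℕ) (μ : Measure (Fin d → ℝ)) (f : (Fin d → ℝ) → ENNReal)
    (S : Set (Fin d → ℝ)) : ENNReal :=
  (μ S)⁻¹ * ∫⁻ x in S, f x ∂μ

/-- Principal cubes, defined by levels. -/
def PrincN (d : ℕ) (𝒮 : Set (ℤ × (Fin d → ℤ))) (μ : Measure (Fin d → ℝ))
    (f : (Fin d → ℝ) → ENNReal) : ℕ → Set (Set (Fin d → ℝ))
  | 0 => ∅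
  | n+1 => {S | inC d 𝒮 S ∧ (anc d 𝒮 S = ∅ ∨
      ∃ T ∈ anc d 𝒮 S, T ∈ PrincN d 𝒮 μ f n ∧
        (∀ U ∈ anc d 𝒮 S, U ∈ PrincN d 𝒮 μ f n → T ⊆ U) ∧
        2 * avg d μ f T < avg d μ f S)}

/-- `S` is a principal cube. -/
def Princ (d : ℕ) (𝒮 : Set (ℤ × (Fin d → ℤ))) (μ : Measure (Fin d → ℝ))
    (f : (Fin d → ℝ) → ENNReal) (S : Set (Fin d → ℝ)) : Prop :=
  S ∈ PrincN d 𝒮 μ f ((anc d 𝒮 S).ncard + 1)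

variable {𝒮 : Set (ℤ × (Fin d → ℤ))} {μ : Measure (Fin d → ℝ)}
  {f : (Fin d → ℝ) → ENNReal}

lemma princ_inC {S : Set (Fin d → ℝ)} (h : Princ d 𝒮 μ f S) : inC d 𝒮 S := by
  have h' : S ∈ PrincN d 𝒮 μ f ((anc d 𝒮 S).ncard + 1) := h
  simp only [PrincN, Set.mem_setOf_eq] at h'
  exact h'.1

/-- The hypothesis that every cube of `𝒮` is contained in a maximal cube. -/
def Hmax (d : ℕ) (𝒮 : Set (ℤ × (Fin d → ℤ))) : Prop :=
  ∀ Q ∈ 𝒮, ∃ G ∈ 𝒮, cubeOf d Q ⊆ cubeOf d G ∧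
    ∀ G' ∈ 𝒮, cubeOf d G ⊆ cubeOf d G' → cubeOf d G = cubeOf d G'

lemma anc_finite (hmax : Hmax d 𝒮) {S : Set (Fin d → ℝ)} (hS : inC d 𝒮 S) :
    (anc d 𝒮 S).Finite := by
  obtain ⟨q, hq, rfl⟩ := hS
  rcases Nat.eq_zero_or_pos d with hd | hd
  · have he : anc d 𝒮 (cubeOf d q) = ∅ := by
      ext T
      simp only [anc, mem_setOf_eq, mem_empty_iff_false, iff_false, not_and]
      rintro ⟨p, hp, rfl⟩ hss
      have h1 : cubeOf d q = univ := by
        ext x; subst hd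
        simp only [cubeOf, dyadicCube, mem_setOf_eq, mem_univ, iff_true]
        exact fun i => absurd i.2 (by omega)
      have h2 : cubeOf d p = univ := by
        ext x; subst hd
        simp only [cubeOf, dyadicCube, mem_setOf_eq, mem_univ, iff_true]
        exact fun i => absurd i.2 (by omega)
      rw [h1, h2] at hss
      exact ssubset_irrefl _ hss
    rw [he]; exact finite_empty
  · obtain ⟨g, hg, hsubg, hgmax⟩ := hmax q hq
    set x0 : Fin d → ℝ := fun i => (q.2 i:ℝ) * 2^(-q.1) with hx0def
    have hx0 : x0 ∈ cubeOf d q := corner_mem q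
    have hI : anc d 𝒮 (cubeOf d q) ⊆
        cubeOf d '' {p | p ∈ 𝒮 ∧ x0 ∈ cubeOf d p ∧ g.1 ≤ p.1 ∧ p.1 ≤ q.1} := by
      rintro T ⟨⟨p, hp, rfl⟩, hsub⟩
      have hxp : x0 ∈ cubeOf d p := hsub.subset hx0
      refine ⟨p, ⟨hp, hxp, ?_, ?_⟩, rfl⟩
      · have hTg : cubeOf d p ⊆ cubeOf d g := by
          rcases cube_comparable hxp (hsubg hx0) with h | h
          · exact h
          · exact (hgmax p hp h).symm.subset
        exact gen_le_of_subset hd hTg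
      · exact gen_le_of_subset hd hsub.subset
    have hIfin : Set.Finite {p | p ∈ 𝒮 ∧ x0 ∈ cubeOf d p ∧ g.1 ≤ p.1 ∧ p.1 ≤ q.1} := by
      apply Set.Finite.of_finite_image (f := Prod.fst)
      · apply Set.Finite.subset (Set.finite_Icc g.1 q.1)
        rintro k ⟨p, ⟨_, _, h1, h2⟩, rfl⟩
        exact ⟨h1, h2⟩
      · rintro p ⟨_, hxp, _⟩ p' ⟨_, hxp', _⟩ hfst
        have hsnd := same_gen hfst hxp hxp'
        exact Prod.ext hfst hsnd
    exact (hIfin.image _).subset hI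

lemma anc_ssubset {S U : Set (Fin d → ℝ)} (hU : U ∈ anc d 𝒮 S) :
    anc d 𝒮 U ⊂ anc d 𝒮 S := by
  constructor
  · rintro T ⟨hT, hsub⟩
    exact ⟨hT, hU.2.trans hsub⟩
  · intro hle
    exact ssubset_irrefl U (hle hU).2

lemma anc_ncard_lt {S U : Set (Fin d → ℝ)} (hfin : (anc d 𝒮 S).Finite)
    (hU : U ∈ anc d 𝒮 S) : (anc d 𝒮 U).ncard < (anc d 𝒮 S).ncard :=
  Set.ncard_lt_ncard (anc_ssubset hU) hfin

lemma princN_succ_iff {j : ℕ} {S : Set (Fin d → ℝ)}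
    (h : ∀ U ∈ anc d 𝒮 S, (U ∈ PrincN d 𝒮 μ f j ↔ Princ d 𝒮 μ f U)) :
    S ∈ PrincN d 𝒮 μ f (j+1) ↔ (inC d 𝒮 S ∧ (anc d 𝒮 S = ∅ ∨
      ∃ T ∈ anc d 𝒮 S, Princ d 𝒮 μ f T ∧
        (∀ U ∈ anc d 𝒮 S, Princ d 𝒮 μ f U → T ⊆ U) ∧
        2 * avg d μ f T < avg d μ f S)) := by
  simp only [PrincN, Set.mem_setOf_eq]
  constructor
  · rintro ⟨h1, h2⟩
    refine ⟨h1, ?_⟩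
    rcases h2 with h2 | ⟨T, hT, hTP, hTmin, hTavg⟩
    · exact Or.inl h2
    · exact Or.inr ⟨T, hT, (h T hT).mp hTP,
        fun U hUa hUP => hTmin U hUa ((h U hUa).mpr hUP), hTavg⟩
  · rintro ⟨h1, h2⟩
    refine ⟨h1, ?_⟩
    rcases h2 with h2 | ⟨T, hT, hTP, hTmin, hTavg⟩
    · exact Or.inl h2
    · exact Or.inr ⟨T, hT, (h T hT).mpr hTP,
        fun U hUa hUP => hTmin U hUa ((h U hUa).mp hUP), hTavg⟩

lemma stab (hmax : Hmax d 𝒮) :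
    ∀ n, ∀ S : Set (Fin d → ℝ), inC d 𝒮 S → (anc d 𝒮 S).ncard < n →
      (S ∈ PrincN d 𝒮 μ f n ↔ Princ d 𝒮 μ f S) := by
  intro n
  induction n using Nat.strong_induction_on with
  | _ n ih =>
    match n with
    | 0 => exact fun S _ h => absurd h (by omega)
    | Nat.succ m =>
      intro S hS hn
      have hfinS := anc_finite hmax hS
      have hUiff : ∀ j, (anc d 𝒮 S).ncard ≤ j → j < m + 1 →
          ∀ U ∈ anc d 𝒮 S, (U ∈ PrincN d 𝒮 μ f j ↔ Princ d 𝒮 μ f U) := by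
        intro j hj1 hj2 U hU
        exact ih j hj2 U hU.1 (lt_of_lt_of_le (anc_ncard_lt hfinS hU) hj1)
      have e1 := princN_succ_iff (μ := μ) (f := f) (S := S)
        (hUiff m (by omega) (by omega))
      have e2 := princN_succ_iff (μ := μ) (f := f) (S := S)
        (hUiff ((anc d 𝒮 S).ncard) le_rfl (by omega))
      rw [e1]
      exact e2.symm

lemma princ_iff (hmax : Hmax d 𝒮) {S : Set (Fin d → ℝ)} (hS : inC d 𝒮 S) :
    Princ d 𝒮 μ f S ↔ (anc d 𝒮 S = ∅ ∨
      ∃ T ∈ anc d 𝒮 S, Princ d 𝒮 μ f T ∧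
        (∀ U ∈ anc d 𝒮 S, Princ d 𝒮 μ f U → T ⊆ U) ∧
        2 * avg d μ f T < avg d μ f S) := by
  have h := princN_succ_iff (μ := μ) (f := f) (S := S)
    (fun U hU => stab hmax _ U hU.1 (anc_ncard_lt (anc_finite hmax hS) hU))
  exact ⟨fun hP => (h.mp hP).2, fun h2 => h.mpr ⟨hS, h2⟩⟩

lemma exists_top (hmax : Hmax d 𝒮) {q : ℤ × (Fin d → ℤ)} (hq : q ∈ 𝒮) :
    ∃ M, inC d 𝒮 M ∧ cubeOf d q ⊆ M ∧ anc d 𝒮 M = ∅ := by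
  obtain ⟨g, hg, hsub, hgmax⟩ := hmax q hq
  refine ⟨cubeOf d g, ⟨g, hg, rfl⟩, hsub, ?_⟩
  ext T
  simp only [anc, mem_setOf_eq, mem_empty_iff_false, iff_false, not_and]
  rintro ⟨p, hp, rfl⟩ hss
  exact hss.ne (hgmax p hp hss.subset)

lemma le_two_mul_self (x : ENNReal) : x ≤ 2 * x := by
  nth_rewrite 1 [← one_mul x]
  exact mul_le_mul_left one_le_two x

lemma princ_double (hmax : Hmax d 𝒮) :
    ∀ n, ∀ S T : Set (Fin d → ℝ), (anc d 𝒮 S).ncard ≤ n →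
      Princ d 𝒮 μ f S → Princ d 𝒮 μ f T → S ⊂ T →
      2 * avg d μ f T < avg d μ f S := by
  intro n
  induction n with
  | zero =>
    intro S T hn hS hT hST
    exfalso
    have hTanc : T ∈ anc d 𝒮 S := ⟨princ_inC hT, hST⟩
    have hfin := anc_finite hmax (princ_inC hS)
    have := (Set.ncard_pos hfin).mpr ⟨T, hTanc⟩
    omega
  | succ n ih =>
    intro S T hn hS hT hST
    have hTanc : T ∈ anc d 𝒮 S := ⟨princ_inC hT, hST⟩
    have hfin := anc_finite hmax (princ_inC hS)
    rcases (princ_iff hmax (princ_inC hS)).mp hS with h0 | ⟨T0, hT0anc, hT0P, hT0min, hT0avg⟩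
    · rw [h0] at hTanc; exact absurd hTanc (notMem_empty T)
    · have hsub := hT0min T hTanc hT
      rcases eq_or_ne T0 T with rfl | hne
      · exact hT0avg
      · have hss : T0 ⊂ T := ssubset_of_subset_of_ne hsub hne
        have h1 : (anc d 𝒮 T0).ncard ≤ n := by
          have := anc_ncard_lt hfin hT0anc; omega
        calc 2 * avg d μ f T < avg d μ f T0 := ih T0 T h1 hT0P hT hss
          _ ≤ 2 * avg d μ f T0 := le_two_mul_self _
          _ < avg d μ f S := hT0avg

lemma exists_principal_above (hmax : Hmax d 𝒮) {q : ℤ × (Fin d → ℤ)} (hq : q ∈ 𝒮) :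
    ∃ G, Princ d 𝒮 μ f G ∧ cubeOf d q ⊆ G ∧
      avg d μ f (cubeOf d q) ≤ 2 * avg d μ f G := by
  classical
  set S := cubeOf d q with hSdef
  have hSC : inC d 𝒮 S := ⟨q, hq, hSdef.symm⟩
  set B : Set (Set (Fin d → ℝ)) := {T | Princ d 𝒮 μ f T ∧ S ⊆ T} with hBdef
  have hBfin : B.Finite := by
    apply Set.Finite.subset ((anc_finite hmax hSC).insert S)
    rintro T ⟨hTP, hsub⟩
    rcases eq_or_ne T S with rfl | hne
    · exact mem_insert _ _
    · exact mem_insert_of_mem _ ⟨princ_inC hTP, ssubset_of_subset_of_ne hsub hne.symm⟩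
  have hBne : B.Nonempty := by
    obtain ⟨M, hMC, hMsub, hM0⟩ := exists_top hmax hq
    exact ⟨M, (princ_iff hmax hMC).mpr (Or.inl hM0), hMsub⟩
  obtain ⟨G, hGB, hGmin⟩ := Set.Finite.exists_minimalFor id B hBfin hBne
  have hx0 : (fun i => ((q.2 i:ℝ)) * 2^(-q.1)) ∈ S := by
    rw [hSdef]; exact corner_mem q
  have hGmin' : ∀ T ∈ B, G ⊆ T := by
    intro T hT
    obtain ⟨pG, _, hpG⟩ := princ_inC hGB.1
    obtain ⟨pT, _, hpT⟩ := princ_inC hT.1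
    have hxG : (fun i => ((q.2 i:ℝ)) * 2^(-q.1)) ∈ cubeOf d pG := by
      rw [hpG]; exact hGB.2 hx0
    have hxT : (fun i => ((q.2 i:ℝ)) * 2^(-q.1)) ∈ cubeOf d pT := by
      rw [hpT]; exact hT.2 hx0
    rcases cube_comparable hxG hxT with h | h
    · rw [← hpG, ← hpT]; exact h
    · have hTG : T ⊆ G := by rw [← hpG, ← hpT]; exact h
      exact hGmin hT hTG
  refine ⟨G, hGB.1, hGB.2, ?_⟩
  by_contra hcon
  push_neg at hcon
  rcases eq_or_ne S G with heq | hne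
  · rw [← heq] at hcon
    exact (le_two_mul_self (avg d μ f S)).not_gt hcon
  · have hSG : S ⊂ G := ssubset_of_subset_of_ne hGB.2 hne
    have hGanc : G ∈ anc d 𝒮 S := ⟨princ_inC hGB.1, hSG⟩
    have hSP : Princ d 𝒮 μ f S := by
      refine (princ_iff hmax hSC).mpr (Or.inr ⟨G, hGanc, hGB.1, ?_, hcon⟩)
      intro U hU hUP
      exact hGmin' U ⟨hUP, hU.2.subset⟩
    exact hSG.not_subset (hGmin' S ⟨hSP, subset_rfl⟩)

end PrincipalAux

open PrincipalAux in
/-- construction of the principal cubes: given a collection `𝒮` of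
dyadic cubes (each contained in a maximal cube of `𝒮`), there is a subcollection
`𝒢 ⊆ 𝒮` such that every `Q ∈ 𝒮` sits inside some `G ∈ 𝒢` with
`𝔼^σ_Q f ≤ 2 𝔼^σ_G f`, and the averages on nested principal cubes double. -/
theorem principal_cubes_exist {d : ℕ} (σ : (Fin d → ℝ) → ENNReal)
    (hσmeas : Measurable σ) (hσpos : ∀ x, 0 < σ x)
    (μ : MeasureTheory.Measure (Fin d → ℝ))
    (hμ : μ = MeasureTheory.volume.withDensity σ)
    (r : ℝ) (hr : 1 < r)
    (f : (Fin d → ℝ) → ENNReal) (hfmeas : Measurable f)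
    (hfLr : (∫⁻ x, f x ^ r ∂μ) < ⊤)
    (hMfin : ∀ᵐ x ∂μ, dyadicMaximal d μ f x < ⊤)
    (𝒮 : Set (ℤ × (Fin d → ℤ)))
    (h𝒮fin : ∀ Q ∈ 𝒮, μ (cubeOf d Q) < ⊤)
    (hmax : ∀ Q ∈ 𝒮, ∃ G ∈ 𝒮, cubeOf d Q ⊆ cubeOf d G ∧
      ∀ G' ∈ 𝒮, cubeOf d G ⊆ cubeOf d G' → cubeOf d G = cubeOf d G') :
    ∃ 𝒢 ⊆ 𝒮,
      (∀ Q ∈ 𝒮, ∃ G ∈ 𝒢, cubeOf d Q ⊆ cubeOf d G ∧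
        (μ (cubeOf d Q))⁻¹ * ∫⁻ x in cubeOf d Q, f x ∂μ ≤
          2 * ((μ (cubeOf d G))⁻¹ * ∫⁻ x in cubeOf d G, f x ∂μ)) ∧
      (∀ G ∈ 𝒢, ∀ G' ∈ 𝒢, cubeOf d G ⊂ cubeOf d G' →
        2 * ((μ (cubeOf d G'))⁻¹ * ∫⁻ x in cubeOf d G', f x ∂μ) <
          (μ (cubeOf d G))⁻¹ * ∫⁻ x in cubeOf d G, f x ∂μ) := by
  have hmax' : Hmax d 𝒮 := hmax
  refine ⟨{p ∈ 𝒮 | Princ d 𝒮 μ f (cubeOf d p)}, fun p hp => hp.1, ?_, ?_⟩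
  · intro Q hQ
    obtain ⟨G, hGP, hsub, havg⟩ := exists_principal_above (μ := μ) (f := f) hmax' hQ
    obtain ⟨g, hgS, hgeq⟩ := princ_inC hGP
    refine ⟨g, ⟨hgS, by rw [hgeq]; exact hGP⟩, by rw [hgeq]; exact hsub, ?_⟩
    show avg d μ f (cubeOf d Q) ≤ 2 * avg d μ f (cubeOf d g)
    rw [hgeq]
    exact havg
  · intro G hG G' hG' hss
    exact princ_double hmax' ((anc d 𝒮 (cubeOf d G)).ncard) _ _ le_rfl hG.2 hG'.2 hss
end

section
/- (Maximum principle) Fix $k \in \mathbb{Z}$, let $\Omega_k = \{\overline{T}(f\sigma) > 2^k\}$, and let $Q$ be a Whitney cube for $\Omega_k$ with $Q^{(2)} \cap \Omega_k^c \neq \emptyset$. Then for all $x \in Q$: $\overline{T}(\mathbf{1}_{(Q^{(2)})^c} f \sigma)(x) \leq 2^k$, where $\overline{T}(g)(x) = (\sum_{R \in \mathcal{Q}} |\tau_R \mathbb{E}_R(g)\mathbf{1}_R(x)|^q)^{1/q}$. -/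
open MeasureTheory Set

/-- The dyadic sublinear operator `T̄ h (x) = (∑_R (τ_R 𝔼_R(h) 1_R(x))^q)^{1/q}`. -/
noncomputable def Tbar (d : ℕ) (q : ℝ) (R : ℕ → ℤ × (Fin d → ℤ)) (τ : ℕ → ENNReal)
    (h : (Fin d → ℝ) → ENNReal) (x : Fin d → ℝ) : ENNReal :=
  (∑' n, (τ n * ((MeasureTheory.volume (cubeOf d (R n)))⁻¹ *
      ∫⁻ y in cubeOf d (R n), h y) *
      (cubeOf d (R n)).indicator (fun _ => (1 : ENNReal)) x) ^ q) ^ (1 / q)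

lemma dyadic_interval_subset {j k : ℤ} (hjk : j ≤ k) {l m : ℤ} {x : ℝ}
    (hx1 : (m : ℝ) * 2 ^ (-k) ≤ x) (hx2 : x < ((m:ℝ)+1) * 2 ^ (-k))
    (hx3 : (l : ℝ) * 2 ^ (-j) ≤ x) (hx4 : x < ((l:ℝ)+1) * 2 ^ (-j))
    {y : ℝ} (hy1 : (m : ℝ) * 2 ^ (-k) ≤ y) (hy2 : y < ((m:ℝ)+1) * 2 ^ (-k)) :
    (l : ℝ) * 2 ^ (-j) ≤ y ∧ y < ((l:ℝ)+1) * 2 ^ (-j) := by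
  have h2k : (0:ℝ) < (2:ℝ) ^ (-k) := zpow_pos (by norm_num) _
  set t : ℕ := (k - j).toNat with ht
  have hpow : (2:ℝ) ^ (-j) = (2:ℝ)^t * 2 ^ (-k) := by
    rw [← zpow_natCast, ← zpow_add₀ (by norm_num : (2:ℝ) ≠ 0)]
    congr 1; omega
  have hA : ((l * 2^t : ℤ) : ℝ) * 2 ^ (-k) = (l:ℝ) * 2 ^ (-j) := by
    push_cast; rw [hpow]; ring
  have hB : ((l * 2^t + 2^t : ℤ) : ℝ) * 2 ^ (-k) = ((l:ℝ)+1) * 2 ^ (-j) := by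
    push_cast; rw [hpow]; ring
  have key1 : l * 2^t ≤ m := by
    have h1 : ((l * 2^t : ℤ) : ℝ) * 2 ^ (-k) < ((m:ℝ)+1) * 2 ^ (-k) :=
      lt_of_le_of_lt (hA ▸ hx3) hx2
    have h2 : ((l * 2^t : ℤ) : ℝ) < (m:ℝ) + 1 := lt_of_mul_lt_mul_right h1 h2k.le
    have : (l * 2^t : ℤ) < m + 1 := by exact_mod_cast h2
    omega
  have key2 : m + 1 ≤ l * 2^t + 2^t := by
    have h1 : (m:ℝ) * 2 ^ (-k) < ((l * 2^t + 2^t : ℤ) : ℝ) * 2 ^ (-k) :=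
      lt_of_le_of_lt hx1 (hB ▸ hx4)
    have h2 : (m:ℝ) < ((l * 2^t + 2^t : ℤ) : ℝ) := lt_of_mul_lt_mul_right h1 h2k.le
    have : (m : ℤ) < l * 2^t + 2^t := by exact_mod_cast h2
    omega
  constructor
  · calc (l:ℝ) * 2 ^ (-j) = ((l * 2^t : ℤ) : ℝ) * 2 ^ (-k) := hA.symm
      _ ≤ (m:ℝ) * 2 ^ (-k) := by
          apply mul_le_mul_of_nonneg_right _ h2k.le; exact_mod_cast key1
      _ ≤ y := hy1
  · calc y < ((m:ℝ)+1) * 2 ^ (-k) := hy2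
      _ ≤ ((l * 2^t + 2^t : ℤ) : ℝ) * 2 ^ (-k) := by
          apply mul_le_mul_of_nonneg_right _ h2k.le
          have h3 : ((m + 1 : ℤ) : ℝ) ≤ ((l * 2^t + 2^t : ℤ) : ℝ) := by exact_mod_cast key2
          push_cast at h3 ⊢; linarith
      _ = ((l:ℝ)+1) * 2 ^ (-j) := hB

lemma dyadicCube_subset {d : ℕ} {j k : ℤ} (hjk : j ≤ k) {l m : Fin d → ℤ}
    {x : Fin d → ℝ} (hxm : x ∈ dyadicCube d k m) (hxl : x ∈ dyadicCube d j l) :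
    dyadicCube d k m ⊆ dyadicCube d j l := by
  intro y hy i
  exact dyadic_interval_subset hjk (hxm i).1 (hxm i).2 (hxl i).1 (hxl i).2 (hy i).1 (hy i).2

lemma cubeOf_subset_parent {d : ℕ} (p : ℤ × (Fin d → ℤ)) :
    cubeOf d p ⊆ parentCubeOf d p := by
  intro x hx i
  obtain ⟨h1, h2⟩ := hx i
  have h2k : (0:ℝ) < (2:ℝ) ^ (-p.1) := zpow_pos (by norm_num) _
  have hpow : (2:ℝ) ^ (-(p.1 - 1)) = 2 * 2 ^ (-p.1) := by
    rw [show -(p.1-1) = 1 + (-p.1) by ring, zpow_add₀ (by norm_num : (2:ℝ) ≠ 0)]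
    norm_num
  have hfd : (p.2 i).fdiv 2 = p.2 i / 2 := Int.fdiv_eq_ediv_of_nonneg _ (by norm_num)
  have hb1 : (2 * ((p.2 i).fdiv 2) : ℤ) ≤ p.2 i := by omega
  have hb2 : p.2 i + 1 ≤ 2 * ((p.2 i).fdiv 2) + 2 := by omega
  constructor
  · show ((((p.2 i).fdiv 2 : ℤ)) : ℝ) * 2 ^ (-(p.1 - 1)) ≤ x i
    rw [hpow]
    calc (((p.2 i).fdiv 2 : ℤ) : ℝ) * (2 * 2 ^ (-p.1))
        = ((2 * ((p.2 i).fdiv 2) : ℤ) : ℝ) * 2 ^ (-p.1) := by push_cast; ring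
      _ ≤ (p.2 i : ℝ) * 2 ^ (-p.1) := by
          apply mul_le_mul_of_nonneg_right _ h2k.le; exact_mod_cast hb1
      _ ≤ x i := h1
  · show x i < ((((p.2 i).fdiv 2 : ℤ) : ℝ) + 1) * 2 ^ (-(p.1 - 1))
    rw [hpow]
    calc x i < ((p.2 i : ℝ) + 1) * 2 ^ (-p.1) := h2
      _ ≤ ((((p.2 i).fdiv 2 : ℤ) : ℝ) + 1) * (2 * 2 ^ (-p.1)) := by
          have : ((p.2 i + 1 : ℤ) : ℝ) ≤ ((2 * ((p.2 i).fdiv 2) + 2 : ℤ) : ℝ) := by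
            exact_mod_cast hb2
          push_cast at this ⊢
          nlinarith [h2k]
      _ = _ := by ring

lemma measurableSet_dyadicCube {d : ℕ} (k : ℤ) (m : Fin d → ℤ) :
    MeasurableSet (dyadicCube d k m) := by
  have : dyadicCube d k m =
      Set.pi Set.univ (fun i => Set.Ico ((m i : ℝ) * 2 ^ (-k)) (((m i : ℝ) + 1) * 2 ^ (-k))) := by
    ext x; simp [dyadicCube, Set.mem_pi, Set.mem_Ico]
  rw [this]
  exact MeasurableSet.univ_pi (fun i => measurableSet_Ico)

/-- maximum principle: if `Q` is a Whitney cube for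
`Ω_k = {T̄(fσ) > 2^k}`, i.e. some point of the grandparent `Q^{(2)}` lies
outside `Ω_k`, then `T̄(1_{(Q^{(2)})ᶜ} fσ) ≤ 2^k` on `Q`. -/
theorem Tbar_maximum_principle {d : ℕ} (q : ℝ) (hq : 1 ≤ q)
    (R : ℕ → ℤ × (Fin d → ℤ)) (τ : ℕ → ENNReal)
    (σ f : (Fin d → ℝ) → ENNReal) (hσmeas : Measurable σ) (hσpos : ∀ x, 0 < σ x)
    (hfmeas : Measurable f)
    (k : ℤ) (Q : ℤ × (Fin d → ℤ))
    (hwhitney : ∃ z ∈ grandparentCubeOf d Q,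
      Tbar d q R τ (fun y => f y * σ y) z ≤ (2 : ENNReal) ^ (k : ℝ)) :
    ∀ x ∈ cubeOf d Q,
      Tbar d q R τ ((grandparentCubeOf d Q)ᶜ.indicator (fun y => f y * σ y)) x ≤
        (2 : ENNReal) ^ (k : ℝ) := by
  obtain ⟨z, hzG, hz⟩ := hwhitney
  intro x hxQ
  set G : Set (Fin d → ℝ) := grandparentCubeOf d Q with hGdef
  have hxG : x ∈ G :=
    cubeOf_subset_parent _ (cubeOf_subset_parent _ hxQ)
  refine le_trans ?_ hz
  unfold Tbar
  apply ENNReal.rpow_le_rpow _ (by positivity)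
  apply ENNReal.tsum_le_tsum
  intro n
  apply ENNReal.rpow_le_rpow _ (by linarith)
  set A : Set (Fin d → ℝ) := cubeOf d (R n) with hAdef
  by_cases hxA : x ∈ A
  · -- x ∈ A; compare generations
    by_cases hgen : Q.1 - 2 ≤ (R n).1
    · -- A ⊆ G, so truncated integral over A vanishes
      have hAG : A ⊆ G := by
        have : dyadicCube d (R n).1 (R n).2 ⊆
            dyadicCube d (Q.1 - 2) ((dyadicParentIdx d (dyadicParentIdx d Q)).2) := by
          apply dyadicCube_subset hgen hxA
          have : (dyadicParentIdx d (dyadicParentIdx d Q)).1 = Q.1 - 2 := by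
            simp [dyadicParentIdx]; ring
          rw [← this]; exact hxG
        intro y hy
        show y ∈ cubeOf d (dyadicParentIdx d (dyadicParentIdx d Q))
        have h1 : (dyadicParentIdx d (dyadicParentIdx d Q)).1 = Q.1 - 2 := by
          simp [dyadicParentIdx]; ring
        show y ∈ dyadicCube d _ _
        rw [h1]
        exact this hy
      have hint : (∫⁻ y in A, Gᶜ.indicator (fun y => f y * σ y) y) = 0 := by
        have hmA : MeasurableSet A := measurableSet_dyadicCube (R n).1 (R n).2
        rw [setLIntegral_congr_fun hmA (fun y hy => ?_), lintegral_zero]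
        · exact Set.indicator_of_notMem (by simp [hAG hy]) _
      rw [hint]
      simp
    · -- G ⊆ A, z ∈ A
      push_neg at hgen
      have hGA : G ⊆ A := by
        have h1 : (dyadicParentIdx d (dyadicParentIdx d Q)).1 = Q.1 - 2 := by
          simp [dyadicParentIdx]; ring
      -- G is a dyadic cube of generation Q.1 - 2 > (R n).1
        have hxG' : x ∈ dyadicCube d (dyadicParentIdx d (dyadicParentIdx d Q)).1
            (dyadicParentIdx d (dyadicParentIdx d Q)).2 := hxG
        exact dyadicCube_subset (by omega) hxG' hxA
      have hzA : z ∈ A := hGA hzG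
      have hind : A.indicator (fun _ => (1:ENNReal)) z = 1 := Set.indicator_of_mem hzA _
      have hindx : A.indicator (fun _ => (1:ENNReal)) x = 1 := Set.indicator_of_mem hxA _
      rw [hind, hindx, mul_one, mul_one]
      apply mul_le_mul_right
      apply mul_le_mul_right
      exact lintegral_mono (fun y => Set.indicator_le_self _ _ _)
  · rw [Set.indicator_of_notMem hxA, mul_zero]
    exact zero_le
end

section
/- With the hypotheses of the maximum principle (Whitney cube $Q$ for $\Omega_k = \{\overline{T}(f\sigma) > 2^k\}$ with $Q^{(2)} \cap \Omega_k^c \neq \emptyset$), for every $x \in Q \cap (\Omega_{k+2} \setminus \Omega_{k+3})$ one has $2^k \leq \overline{T}^{in}_{Q^{(1)}}(\mathbf{1}_{Q^{(1)}} f\sigma)(x)$, where $\overline{T}^{in}_{Q^{(1)}}$ denotes the restriction of the sum defining $\overline{T}$ to cubes $R \in \mathcal{Q}$ with $R \subseteq Q^{(1)}$. -/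
open MeasureTheory Set

/-- The dyadic operator `T̄` restricted to the indices in `S`. -/
noncomputable def TbarOn (d : ℕ) (q : ℝ) (R : ℕ → ℤ × (Fin d → ℤ)) (τ : ℕ → ENNReal)
    (S : Set ℕ) (h : (Fin d → ℝ) → ENNReal) (x : Fin d → ℝ) : ENNReal :=
  (∑' n : S, (τ n * ((MeasureTheory.volume (cubeOf d (R n)))⁻¹ *
      ∫⁻ y in cubeOf d (R n), h y) *
      (cubeOf d (R n)).indicator (fun _ => (1 : ENNReal)) x) ^ q) ^ (1 / q)


lemma myFloorDiv (a : ℝ) (N : ℕ) : ⌊a / 2 ^ N⌋ = ⌊a⌋ / (2 ^ N : ℤ) := by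
  have h2 : (0:ℝ) < 2 ^ N := by positivity
  have h2' : (0:ℤ) < 2 ^ N := by positivity
  set n : ℤ := ⌊a⌋ / (2 ^ N : ℤ) with hn
  have hmod := Int.mul_ediv_add_emod ⌊a⌋ (2 ^ N)
  have hm0 : 0 ≤ ⌊a⌋ % (2 ^ N : ℤ) := Int.emod_nonneg _ (by positivity)
  have hm1 : ⌊a⌋ % (2 ^ N : ℤ) < 2 ^ N := Int.emod_lt_of_pos _ h2'
  have key1 : n * 2 ^ N ≤ ⌊a⌋ := by linarith [hmod, hm0]
  have key2 : ⌊a⌋ + 1 ≤ (n + 1) * 2 ^ N := by linarith [hmod, hm1]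
  rw [Int.floor_eq_iff]
  constructor
  · rw [le_div_iff₀ h2]
    have : (n : ℝ) * 2 ^ N ≤ ⌊a⌋ := by exact_mod_cast key1
    exact this.trans (Int.floor_le a)
  · rw [div_lt_iff₀ h2]
    have h1 : a < (⌊a⌋ : ℝ) + 1 := Int.lt_floor_add_one a
    have : ((⌊a⌋ : ℝ)) + 1 ≤ ((n : ℝ) + 1) * 2 ^ N := by exact_mod_cast key2
    linarith

lemma myFloorScale {a b : ℝ} {l k : ℤ} (hlk : l ≤ k)
    (h : ⌊a * 2 ^ k⌋ = ⌊b * 2 ^ k⌋) : ⌊a * 2 ^ l⌋ = ⌊b * 2 ^ l⌋ := by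
  set N : ℕ := (k - l).toNat with hN
  have hkl : k = l + N := by
    rw [hN, Int.toNat_of_nonneg (by omega)]; omega
  have hpow : (2:ℝ) ^ l = 2 ^ k / 2 ^ N := by
    rw [hkl, zpow_add₀ (by norm_num : (2:ℝ) ≠ 0), zpow_natCast]
    field_simp
  have ha : a * 2 ^ l = a * 2 ^ k / 2 ^ N := by rw [hpow]; ring
  have hb : b * 2 ^ l = b * 2 ^ k / 2 ^ N := by rw [hpow]; ring
  rw [ha, hb, myFloorDiv, myFloorDiv, h]

lemma mem_dyadicCube_iff {d : ℕ} {k : ℤ} {m : Fin d → ℤ} {x : Fin d → ℝ} :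
    x ∈ dyadicCube d k m ↔ ∀ i, ⌊x i * 2 ^ k⌋ = m i := by
  unfold dyadicCube
  simp only [mem_setOf_eq]
  refine forall_congr' fun i => ?_
  have h2 : (0:ℝ) < 2 ^ k := zpow_pos (by norm_num) k
  rw [Int.floor_eq_iff, zpow_neg, ← div_eq_mul_inv, ← div_eq_mul_inv,
    div_le_iff₀ h2, lt_div_iff₀ h2]

lemma cube_subset_of_le {d : ℕ} {p p' : ℤ × (Fin d → ℤ)} (hle : p'.1 ≤ p.1)
    {x : Fin d → ℝ} (hx : x ∈ cubeOf d p) (hx' : x ∈ cubeOf d p') :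
    cubeOf d p ⊆ cubeOf d p' := by
  intro y hy
  rw [cubeOf, mem_dyadicCube_iff] at *
  intro i
  have h1 : ⌊y i * 2 ^ p.1⌋ = ⌊x i * 2 ^ p.1⌋ := by rw [hy i, hx i]
  have := myFloorScale hle h1
  rw [this, hx' i]

lemma mem_parentCubeOf {d : ℕ} {p : ℤ × (Fin d → ℤ)} {x : Fin d → ℝ}
    (hx : x ∈ cubeOf d p) : x ∈ parentCubeOf d p := by
  rw [cubeOf, mem_dyadicCube_iff] at hx
  rw [parentCubeOf, cubeOf, dyadicParentIdx, mem_dyadicCube_iff]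
  intro i
  show ⌊x i * 2 ^ (p.1 - 1)⌋ = Int.fdiv (p.2 i) 2
  have h1 : x i * 2 ^ (p.1 - 1) = x i * 2 ^ p.1 / 2 ^ (1:ℕ) := by
    rw [zpow_sub₀ (by norm_num : (2:ℝ) ≠ 0)]
    ring
  rw [h1, myFloorDiv, hx i, Int.fdiv_eq_ediv_of_nonneg _ (by norm_num)]
  norm_num

lemma grandparent_subset {d : ℕ} {Q p : ℤ × (Fin d → ℤ)} {x : Fin d → ℝ}
    (hxQ : x ∈ cubeOf d Q) (hxp : x ∈ cubeOf d p)
    (hnot : ¬ cubeOf d p ⊆ parentCubeOf d Q) :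
    grandparentCubeOf d Q ⊆ cubeOf d p := by
  by_cases hc : p.1 ≤ Q.1 - 2
  · have hxg : x ∈ grandparentCubeOf d Q :=
      mem_parentCubeOf (mem_parentCubeOf hxQ)
    exact cube_subset_of_le (by simp [dyadicParentIdx]; omega) hxg hxp
  · exact absurd
      (cube_subset_of_le (by simp [dyadicParentIdx]; omega) hxp (mem_parentCubeOf hxQ)) hnot

lemma measurableSet_cubeOf {d : ℕ} (p : ℤ × (Fin d → ℤ)) :
    MeasurableSet (cubeOf d p) := by
  have : cubeOf d p = ⋂ i, (fun x : Fin d → ℝ => x i) ⁻¹'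
      (Ico ((p.2 i : ℝ) * 2 ^ (-p.1)) (((p.2 i : ℝ) + 1) * 2 ^ (-p.1))) := by
    ext x; simp [cubeOf, dyadicCube, mem_iInter, Ico]
  rw [this]
  exact MeasurableSet.iInter fun i => measurableSet_Ico.preimage (measurable_pi_apply i)

/-- with the maximum-principle hypotheses, on
`Q ∩ (Ω_{k+2} \ Ω_{k+3})` the inner part over `Q^{(1)}` is at least `2^k`:
`2^k ≤ T̄^in_{Q^{(1)}}(1_{Q^{(1)}} fσ)(x)`. -/
theorem Tbar_inner_lower_bound {d : ℕ} (q : ℝ) (hq : 1 ≤ q)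
    (R : ℕ → ℤ × (Fin d → ℤ)) (τ : ℕ → ENNReal)
    (σ f : (Fin d → ℝ) → ENNReal) (hσmeas : Measurable σ) (hσpos : ∀ x, 0 < σ x)
    (hfmeas : Measurable f)
    (k : ℤ) (Q : ℤ × (Fin d → ℤ))
    (hwhitney : ∃ z ∈ grandparentCubeOf d Q,
      TbarOn d q R τ Set.univ (fun y => f y * σ y) z ≤ (2 : ENNReal) ^ (k : ℝ))
    (x : Fin d → ℝ) (hx : x ∈ cubeOf d Q)
    (hx2 : (2 : ENNReal) ^ ((k : ℝ) + 2) <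
      TbarOn d q R τ Set.univ (fun y => f y * σ y) x)
    (hx3 : TbarOn d q R τ Set.univ (fun y => f y * σ y) x ≤
      (2 : ENNReal) ^ ((k : ℝ) + 3)) :
    (2 : ENNReal) ^ (k : ℝ) ≤
      TbarOn d q R τ {n | cubeOf d (R n) ⊆ parentCubeOf d Q}
        ((parentCubeOf d Q).indicator (fun y => f y * σ y)) x := by
  obtain ⟨z, hz, hzle⟩ := hwhitney
  have hq0 : 0 < q := lt_of_lt_of_le one_pos hq
  set S : Set ℕ := {n | cubeOf d (R n) ⊆ parentCubeOf d Q} with hS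
  set g : (Fin d → ℝ) → ENNReal := fun y => f y * σ y with hg
  set t : ℕ → (Fin d → ℝ) → ENNReal := fun n w =>
    τ n * ((volume (cubeOf d (R n)))⁻¹ * ∫⁻ y in cubeOf d (R n), g y) *
      (cubeOf d (R n)).indicator (fun _ => (1 : ENNReal)) w with ht
  -- the inner operator coincides with the sum of full terms over S
  have hTin : TbarOn d q R τ S ((parentCubeOf d Q).indicator g) x
      = (∑' n : S, t n x ^ q) ^ (1/q) := by
    unfold TbarOn
    congr 1
    apply tsum_congr
    rintro ⟨n, hn⟩
    have hsub : cubeOf d (R n) ⊆ parentCubeOf d Q := hn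
    have hint : (∫⁻ y in cubeOf d (R n), (parentCubeOf d Q).indicator g y)
        = ∫⁻ y in cubeOf d (R n), g y :=
      setLIntegral_congr_fun (measurableSet_cubeOf _)
        (fun y hy => indicator_of_mem (hsub hy) g)
    simp only [ht, hint]
  -- splitting of the full operator
  have hsplit : TbarOn d q R τ Set.univ g x
      = ((∑' n : S, t n x ^ q) + ∑' n : ↑Sᶜ, t n x ^ q) ^ (1/q) := by
    unfold TbarOn
    rw [tsum_univ (f := fun n => t n x ^ q),
      ← Summable.tsum_add_tsum_compl (s := S) (f := fun n => t n x ^ q)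
        ENNReal.summable ENNReal.summable]
  have hle1 : TbarOn d q R τ Set.univ g x ≤
      (∑' n : S, t n x ^ q) ^ (1/q) + (∑' n : ↑Sᶜ, t n x ^ q) ^ (1/q) := by
    rw [hsplit]
    exact ENNReal.rpow_add_le_add_rpow _ _ (by positivity) ((div_le_one hq0).mpr hq)
  -- the outer part is controlled by the value at z
  have hout : (∑' n : ↑Sᶜ, t n x ^ q) ^ (1/q) ≤ (2 : ENNReal) ^ (k : ℝ) := by
    have hterm : ∀ n : ↑Sᶜ, t (↑n) x ^ q ≤ t (↑n) z ^ q := by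
      rintro ⟨n, hn⟩
      by_cases hxn : x ∈ cubeOf d (R n)
      · have hzn : z ∈ cubeOf d (R n) := grandparent_subset hx hxn hn hz
        simp only [ht, indicator_of_mem hxn, indicator_of_mem hzn, le_refl]
      · simp only [ht, indicator_of_notMem hxn, mul_zero]
        rw [ENNReal.zero_rpow_of_pos hq0]
        exact zero_le
    have h1 : (∑' n : ↑Sᶜ, t n x ^ q) ≤ ∑' n : ℕ, t n z ^ q :=
      le_trans (ENNReal.tsum_le_tsum hterm)
        (Summable.tsum_le_tsum_of_inj (↑) Subtype.val_injective (fun _ _ => zero_le)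
          (fun _ => le_rfl) ENNReal.summable ENNReal.summable)
    calc (∑' n : ↑Sᶜ, t n x ^ q) ^ (1/q)
        ≤ (∑' n : ℕ, t n z ^ q) ^ (1/q) := ENNReal.rpow_le_rpow h1 (by positivity)
      _ = TbarOn d q R τ Set.univ g z := by
          unfold TbarOn; rw [tsum_univ (f := fun n => t n z ^ q)]
      _ ≤ _ := hzle
  -- conclude by contradiction
  by_contra hcon
  push_neg at hcon
  rw [hTin] at hcon
  have h2kne : (2 : ENNReal) ^ (k : ℝ) ≠ ⊤ := by
    intro h
    rw [ENNReal.rpow_eq_top_iff] at h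
    rcases h with ⟨h1, _⟩ | ⟨h1, _⟩ <;> norm_num at h1
  have hlt : TbarOn d q R τ Set.univ g x
      < (2 : ENNReal) ^ (k : ℝ) + (2 : ENNReal) ^ (k : ℝ) := by
    calc TbarOn d q R τ Set.univ g x
        ≤ (∑' n : S, t n x ^ q) ^ (1/q) + (∑' n : ↑Sᶜ, t n x ^ q) ^ (1/q) := hle1
      _ ≤ (∑' n : S, t n x ^ q) ^ (1/q) + (2 : ENNReal) ^ (k : ℝ) :=
          add_le_add_right hout _
      _ < (2 : ENNReal) ^ (k : ℝ) + (2 : ENNReal) ^ (k : ℝ) :=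
          ENNReal.add_lt_add_right h2kne hcon
  have hsum : (2 : ENNReal) ^ (k : ℝ) + (2 : ENNReal) ^ (k : ℝ)
      ≤ (2 : ENNReal) ^ ((k : ℝ) + 2) := by
    have h1 : (2 : ENNReal) ^ ((k : ℝ) + 1) = 2 ^ (k : ℝ) + 2 ^ (k : ℝ) := by
      rw [ENNReal.rpow_add _ _ (by norm_num) (by norm_num), ENNReal.rpow_one,
        mul_two]
    rw [← h1]
    exact ENNReal.rpow_le_rpow_of_exponent_le (by norm_num) (by linarith)
  exact absurd hx2 (not_lt.mpr (le_of_lt (lt_of_lt_of_le hlt hsum)))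
end

section
/- (Bounded occurrences, chain case) Let $R, Q_1, \dots, Q_m$ be dyadic cubes with $Q_1 \subsetneq Q_2 \subsetneq \cdots \subsetneq Q_m$, and suppose there are integers $k_1 > k_2 > \cdots > k_m$ and a decreasing family of open sets $(\Omega_k)$ with Whitney decompositions $\mathcal{Q}_k$ (satisfying $Q^{(1)} \subseteq \Omega_k$ and $Q^{(2)} \cap \Omega_k^c \ne \emptyset$ for $Q \in \mathcal{Q}_k$) such that for each $l$: $Q_l \in \mathcal{Q}_{k_l}$ and $R \in \mathcal{Q}_{k_l + 3}$ with $R \subseteq Q_l^{(1)}$. Then $m \leq 6$. -/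
open MeasureTheory Set

lemma two_zpow_pos (k : ℤ) : (0:ℝ) < 2 ^ k := zpow_pos (by norm_num) k

lemma zpow_split {k k' : ℤ} (h : k ≤ k') :
    (2:ℝ) ^ (-k) = ((2 ^ (k'-k).toNat : ℤ) : ℝ) * 2 ^ (-k') := by
  have h1 : (((2:ℤ) ^ (k'-k).toNat : ℤ) : ℝ) = (2:ℝ) ^ (((k'-k).toNat : ℤ)) := by
    push_cast
    exact (zpow_natCast _ _).symm
  rw [h1, ← zpow_add₀ (two_ne_zero)]
  congr 1
  omega

lemma interval_subset {k k' m m' : ℤ} (hk : k ≤ k') {x y : ℝ}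
    (h1a : (m':ℝ) * 2 ^ (-k') ≤ x) (h1b : x < ((m':ℝ)+1) * 2 ^ (-k'))
    (h2a : (m:ℝ) * 2 ^ (-k) ≤ x) (h2b : x < ((m:ℝ)+1) * 2 ^ (-k))
    (hya : (m':ℝ) * 2 ^ (-k') ≤ y) (hyb : y < ((m':ℝ)+1) * 2 ^ (-k')) :
    (m:ℝ) * 2 ^ (-k) ≤ y ∧ y < ((m:ℝ)+1) * 2 ^ (-k) := by
  set N : ℤ := 2 ^ (k'-k).toNat with hN
  have hsplit : (2:ℝ) ^ (-k) = (N : ℝ) * 2 ^ (-k') := zpow_split hk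
  have hc : (0:ℝ) < 2 ^ (-k') := two_zpow_pos _
  have h1 : (m:ℝ) * N * 2^(-k') < ((m':ℝ)+1) * 2^(-k') := by
    calc (m:ℝ) * N * 2^(-k') = (m:ℝ) * 2^(-k) := by rw [hsplit]; ring
    _ ≤ x := h2a
    _ < _ := h1b
  have h1' : m * N ≤ m' := by
    have h := (mul_lt_mul_iff_of_pos_right hc).mp h1
    have h2 : m * N < m' + 1 := by exact_mod_cast h
    omega
  have h2 : ((m':ℝ)) * 2^(-k') < ((m:ℝ)+1) * N * 2^(-k') := by
    calc ((m':ℝ)) * 2^(-k') ≤ x := h1a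
    _ < ((m:ℝ)+1) * 2^(-k) := h2b
    _ = ((m:ℝ)+1) * N * 2^(-k') := by rw [hsplit]; ring
  have h2' : m' + 1 ≤ (m+1) * N := by
    have h := (mul_lt_mul_iff_of_pos_right hc).mp h2
    have h3 : m' < (m+1) * N := by exact_mod_cast h
    omega
  constructor
  · calc (m:ℝ) * 2^(-k) = ((m*N : ℤ):ℝ) * 2^(-k') := by push_cast; rw [hsplit]; ring
    _ ≤ (m':ℝ) * 2^(-k') := by
        apply mul_le_mul_of_nonneg_right _ hc.le
        exact_mod_cast h1'
    _ ≤ y := hya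
  · calc y < ((m':ℝ)+1) * 2^(-k') := hyb
    _ ≤ (((m+1)*N : ℤ):ℝ) * 2^(-k') := by
        apply mul_le_mul_of_nonneg_right _ hc.le
        exact_mod_cast h2'
    _ = ((m:ℝ)+1) * 2^(-k) := by push_cast; rw [hsplit]; ring

lemma cubeOf_nonempty (d : ℕ) (p : ℤ × (Fin d → ℤ)) : (cubeOf d p).Nonempty := by
  refine ⟨fun i => (p.2 i : ℝ) * 2 ^ (-p.1), fun i => ⟨le_refl _, ?_⟩⟩
  exact mul_lt_mul_of_pos_right (lt_add_one _) (two_zpow_pos _)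

lemma cube_subset_of_le_of_inter {d : ℕ} {p q : ℤ × (Fin d → ℤ)} (hk : q.1 ≤ p.1)
    (h : (cubeOf d p ∩ cubeOf d q).Nonempty) : cubeOf d p ⊆ cubeOf d q := by
  obtain ⟨x, hxp, hxq⟩ := h
  intro y hy i
  exact interval_subset hk (hxp i).1 (hxp i).2 (hxq i).1 (hxq i).2 (hy i).1 (hy i).2

lemma subset_parent {d : ℕ} (p : ℤ × (Fin d → ℤ)) :
    cubeOf d p ⊆ cubeOf d (dyadicParentIdx d p) := by
  intro x hx i
  have h := hx i
  have hf : 2 * Int.fdiv (p.2 i) 2 ≤ p.2 i ∧ p.2 i + 1 ≤ 2 * (Int.fdiv (p.2 i) 2 + 1) := by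
    rw [Int.fdiv_eq_ediv_of_nonneg _ (by norm_num)]
    omega
  have hc : (0:ℝ) < 2 ^ (-p.1) := two_zpow_pos _
  have hsplit : (2:ℝ) ^ (-(p.1 - 1)) = 2 * 2 ^ (-p.1) := by
    rw [show -(p.1-1) = 1 + -p.1 by ring, zpow_add₀ (two_ne_zero : (2:ℝ) ≠ 0)]
    norm_num
  have hf1 : ((2 * Int.fdiv (p.2 i) 2 : ℤ) : ℝ) ≤ (p.2 i : ℝ) := by exact_mod_cast hf.1
  have hf2 : ((p.2 i : ℤ) : ℝ) + 1 ≤ ((2 * (Int.fdiv (p.2 i) 2 + 1) : ℤ) : ℝ) := by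
    exact_mod_cast hf.2
  constructor
  · show (((dyadicParentIdx d p).2 i : ℤ) : ℝ) * 2 ^ (-(p.1 - 1)) ≤ x i
    calc ((Int.fdiv (p.2 i) 2 : ℤ) : ℝ) * 2 ^ (-(p.1-1))
        = ((2 * Int.fdiv (p.2 i) 2 : ℤ) : ℝ) * 2 ^ (-p.1) := by rw [hsplit]; push_cast; ring
    _ ≤ (p.2 i : ℝ) * 2 ^ (-p.1) := mul_le_mul_of_nonneg_right hf1 hc.le
    _ ≤ x i := h.1
  · show x i < (((Int.fdiv (p.2 i) 2 : ℤ) : ℝ) + 1) * 2 ^ (-(p.1 - 1))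
    calc x i < ((p.2 i : ℝ) + 1) * 2 ^ (-p.1) := h.2
    _ ≤ ((2 * (Int.fdiv (p.2 i) 2 + 1) : ℤ) : ℝ) * 2 ^ (-p.1) := by
        apply mul_le_mul_of_nonneg_right _ hc.le
        push_cast at hf2 ⊢
        linarith
    _ = ((Int.fdiv (p.2 i) 2 : ℝ) + 1) * 2 ^ (-(p.1-1)) := by rw [hsplit]; push_cast; ring

lemma gen_lt_of_ssubset {d : ℕ} {p q : ℤ × (Fin d → ℤ)}
    (h : cubeOf d p ⊂ cubeOf d q) : q.1 < p.1 := by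
  by_contra hle
  push_neg at hle
  obtain ⟨x, hx⟩ := cubeOf_nonempty d p
  have hsub : cubeOf d q ⊆ cubeOf d p :=
    cube_subset_of_le_of_inter hle ⟨x, h.subset hx, hx⟩
  exact h.2 hsub

lemma gen_le_of_subset {d : ℕ} (hd : 0 < d) {p q : ℤ × (Fin d → ℤ)}
    (h : cubeOf d p ⊆ cubeOf d q) : q.1 ≤ p.1 := by
  by_contra hlt
  push_neg at hlt
  set i : Fin d := ⟨0, hd⟩
  obtain ⟨x, hx⟩ := cubeOf_nonempty d p
  -- corner point
  set x0 : Fin d → ℝ := fun j => (p.2 j : ℝ) * 2 ^ (-p.1) with hx0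
  have hx0p : x0 ∈ cubeOf d p := fun j =>
    ⟨le_refl _, mul_lt_mul_of_pos_right (lt_add_one _) (two_zpow_pos _)⟩
  have hx0q := h hx0p
  set N : ℤ := 2 ^ (q.1 - p.1).toNat with hN
  have hsplit : (2:ℝ) ^ (-p.1) = (N : ℝ) * 2 ^ (-q.1) := zpow_split hlt.le
  have hc : (0:ℝ) < 2 ^ (-q.1) := two_zpow_pos _
  have hq := hx0q i
  have hx0i : x0 i = (p.2 i : ℝ) * 2 ^ (-p.1) := rfl
  have hint : q.2 i = p.2 i * N := by
    have h1 : (q.2 i : ℝ) * 2 ^ (-q.1) ≤ ((p.2 i * N : ℤ) : ℝ) * 2 ^ (-q.1) := by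
      calc (q.2 i : ℝ) * 2 ^ (-q.1) ≤ x0 i := hq.1
      _ = ((p.2 i * N : ℤ) : ℝ) * 2 ^ (-q.1) := by
            rw [hx0i, hsplit]; push_cast; ring
    have h2 : ((p.2 i * N : ℤ) : ℝ) * 2 ^ (-q.1) < ((q.2 i : ℝ) + 1) * 2 ^ (-q.1) := by
      calc ((p.2 i * N : ℤ) : ℝ) * 2 ^ (-q.1) = x0 i := by
            rw [hx0i, hsplit]; push_cast; ring
      _ < _ := hq.2
    have h1' : (q.2 i) ≤ p.2 i * N := by
      have := (mul_le_mul_iff_of_pos_right hc).mp h1; exact_mod_cast this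
    have h2' : p.2 i * N < q.2 i + 1 := by
      have := (mul_lt_mul_iff_of_pos_right hc).mp h2; exact_mod_cast this
    omega
  -- the point y escapes cube q at coordinate i
  set y : Fin d → ℝ := Function.update x0 i ((p.2 i : ℝ) * 2 ^ (-p.1) + 2 ^ (-q.1)) with hy
  have hNge : (2:ℤ) ≤ N := by
    rw [hN]
    calc (2:ℤ) = 2 ^ 1 := by norm_num
    _ ≤ 2 ^ (q.1 - p.1).toNat := by
        apply pow_le_pow_right₀ (by norm_num)
        omega
  have hsmall : (2:ℝ) ^ (-q.1) < 2 ^ (-p.1) := by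
    rw [hsplit]
    nlinarith [hc, (show (2:ℝ) ≤ (N:ℝ) by exact_mod_cast hNge)]
  have hyp : y ∈ cubeOf d p := by
    intro j
    by_cases hij : j = i
    · subst hij
      simp only [hy, Function.update_self]
      constructor
      · nlinarith [hc]
      · nlinarith [hsmall]
    · simp only [hy, Function.update_of_ne hij]
      exact hx0p j
  have hyq := (h hyp) i
  have : y i = ((q.2 i : ℝ) + 1) * 2 ^ (-q.1) := by
    simp only [hy, Function.update_self, hint]
    rw [hsplit]; push_cast; ring
  rw [this] at hyq
  exact absurd hyq.2 (lt_irrefl _)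

lemma cubeOf_zero (p : ℤ × (Fin 0 → ℤ)) : cubeOf 0 p = Set.univ := by
  ext x
  simp only [cubeOf, dyadicCube, mem_setOf_eq, mem_univ, iff_true]
  intro i
  exact i.elim0

lemma Omega_mono {d : ℕ} (Ω : ℤ → Set (Fin d → ℝ)) (hdec : ∀ k, Ω (k+1) ⊆ Ω k)
    {a b : ℤ} (h : a ≤ b) : Ω b ⊆ Ω a := by
  have key : ∀ n : ℕ, Ω (a + n) ⊆ Ω a := by
    intro n
    induction n with
    | zero => simp
    | succ n ih =>
      have h1 : Ω (a + n + 1) ⊆ Ω (a + n) := hdec (a + n)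
      have h2 : a + ((n : ℤ) + 1) = a + n + 1 := by ring
      intro x hx
      apply ih
      apply h1
      rw [← h2]
      exact_mod_cast hx
  have hb : b = a + ((b - a).toNat : ℤ) := by omega
  rw [hb]
  exact key _

/-- bounded occurrences, chain case: if `R` is a Whitney cube at
levels `k_l + 3` for a strictly increasing chain of Whitney cubes
`Q_1 ⊊ ⋯ ⊊ Q_m` with `Q_l ∈ 𝒬_{k_l}`, `k_1 > ⋯ > k_m` and `R ⊆ Q_l^{(1)}`,
then `m ≤ 6`. -/
theorem bounded_occurrences_chain {d : ℕ} (Ω : ℤ → Set (Fin d → ℝ))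
    (hopen : ∀ k, IsOpen (Ω k)) (hproper : ∀ k, Ω k ≠ Set.univ)
    (hdec : ∀ k, Ω (k + 1) ⊆ Ω k)
    (𝒬 : ℤ → Set (ℤ × (Fin d → ℤ)))
    (hdisj : ∀ k, ∀ p ∈ 𝒬 k, ∀ p' ∈ 𝒬 k, p ≠ p' → Disjoint (cubeOf d p) (cubeOf d p'))
    (hunion : ∀ k, (⋃ p ∈ 𝒬 k, cubeOf d p) = Ω k)
    (hparent : ∀ k, ∀ p ∈ 𝒬 k, parentCubeOf d p ⊆ Ω k)
    (hgrand : ∀ k, ∀ p ∈ 𝒬 k, (grandparentCubeOf d p ∩ (Ω k)ᶜ).Nonempty)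
    (m : ℕ) (Rc : ℤ × (Fin d → ℤ)) (Q : Fin m → ℤ × (Fin d → ℤ)) (k : Fin m → ℤ)
    (hchain : ∀ i j : Fin m, i < j → cubeOf d (Q i) ⊂ cubeOf d (Q j))
    (hk : ∀ i j : Fin m, i < j → k j < k i)
    (hQmem : ∀ l, Q l ∈ 𝒬 (k l))
    (hRmem : ∀ l, Rc ∈ 𝒬 (k l + 3))
    (hRsub : ∀ l, cubeOf d Rc ⊆ parentCubeOf d (Q l)) :
    m ≤ 6 := by
  by_contra hm
  push_neg at hm
  rcases Nat.eq_zero_or_pos d with hd | hd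
  · subst hd
    have h01 := hchain ⟨0, by omega⟩ ⟨1, by omega⟩ (Fin.mk_lt_mk.mpr (by norm_num))
    rw [cubeOf_zero, cubeOf_zero] at h01
    exact h01.2 subset_rfl
  · have g01 : (Q ⟨1, by omega⟩).1 < (Q ⟨0, by omega⟩).1 :=
      gen_lt_of_ssubset (hchain _ _ (Fin.mk_lt_mk.mpr (by norm_num)))
    have g12 : (Q ⟨2, by omega⟩).1 < (Q ⟨1, by omega⟩).1 :=
      gen_lt_of_ssubset (hchain _ _ (Fin.mk_lt_mk.mpr (by norm_num)))
    have gR : (Q ⟨0, by omega⟩).1 - 1 ≤ Rc.1 := gen_le_of_subset hd (hRsub ⟨0, by omega⟩)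
    obtain ⟨x, hxR⟩ := cubeOf_nonempty d Rc
    have hxG : x ∈ cubeOf d (dyadicParentIdx d (dyadicParentIdx d Rc)) :=
      subset_parent _ (subset_parent _ hxR)
    have hxP2 : x ∈ cubeOf d (dyadicParentIdx d (Q ⟨2, by omega⟩)) := hRsub ⟨2, by omega⟩ hxR
    have hgen : (dyadicParentIdx d (Q ⟨2, by omega⟩)).1
        ≤ (dyadicParentIdx d (dyadicParentIdx d Rc)).1 := by
      show (Q ⟨2, by omega⟩).1 - 1 ≤ Rc.1 - 1 - 1
      omega
    have hcont : cubeOf d (dyadicParentIdx d (dyadicParentIdx d Rc))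
        ⊆ cubeOf d (dyadicParentIdx d (Q ⟨2, by omega⟩)) :=
      cube_subset_of_le_of_inter hgen ⟨x, hxG, hxP2⟩
    have hP2 : cubeOf d (dyadicParentIdx d (Q ⟨2, by omega⟩)) ⊆ Ω (k ⟨2, by omega⟩) :=
      hparent _ _ (hQmem ⟨2, by omega⟩)
    have hk23 : k ⟨3, by omega⟩ < k ⟨2, by omega⟩ := hk _ _ (Fin.mk_lt_mk.mpr (by norm_num))
    have hk34 : k ⟨4, by omega⟩ < k ⟨3, by omega⟩ := hk _ _ (Fin.mk_lt_mk.mpr (by norm_num))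
    have hk45 : k ⟨5, by omega⟩ < k ⟨4, by omega⟩ := hk _ _ (Fin.mk_lt_mk.mpr (by norm_num))
    have hmono : Ω (k ⟨2, by omega⟩) ⊆ Ω (k ⟨5, by omega⟩ + 3) := Omega_mono Ω hdec (by omega)
    obtain ⟨z, hz1, hz2⟩ := hgrand (k ⟨5, by omega⟩ + 3) Rc (hRmem ⟨5, by omega⟩)
    exact hz2 (hmono (hP2 (hcont hz1)))
end
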